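/- Let P, Q be perfect-tree forcing notions and D ⊆ P, and suppose P ⊑_D Q (Q locks D over P). Then D is pre-dense in P ∪ Q, and if in addition P is regular, then D is pre-dense in P as well. -/
import Mathlib


noncomputable section

/-- Finite binary strings. -/
abbrev Str : Type := List Bool

/-- Points of Cantor space `2^ω`. -/
abbrev Pt : Type := ℕ → Bool

/-- The length-`n` initial segment of a point of Cantor space, as a string. -/
def seg (a : Pt) (n : ℕ) : Str := (List.range n).map a

/-- A tree: a set of strings closed under initial segments. -/
def IsTree (T : Set Str) : Prop := ∀ ⦃s t : Str⦄, s <+: t → t ∈ T → s ∈ T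

/-- A perfect tree: a nonempty tree in which every string has two
incomparable extensions inside the tree. -/
def IsPerfectTree (T : Set Str) : Prop :=
  T.Nonempty ∧ IsTree T ∧
    ∀ s ∈ T, ∃ t₁ t₂, t₁ ∈ T ∧ t₂ ∈ T ∧ s <+: t₁ ∧ s <+: t₂ ∧ ¬ t₁ <+: t₂ ∧ ¬ t₂ <+: t₁

/-- The restriction `T↾s = {t ∈ T : s ⊆ t or t ⊆ s}`. -/
def Tres (T : Set Str) (s : Str) : Set Str := {t ∈ T | s <+: t ∨ t <+: s}

/-- The set `[T]` of branches of a tree `T`. -/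
def branches (T : Set Str) : Set Pt := {a | ∀ n, seg a n ∈ T}

/-- `s` is the stem (root) of `T`: the longest `s ∈ T` with `T = T↾s`. -/
def IsStem (T : Set Str) (s : Str) : Prop :=
  s ∈ T ∧ T = Tres T s ∧ ∀ t ∈ T, T = Tres T t → t <+: s

open Classical in
/-- The stem `root(T)` of a tree (junk value `[]` if there is none). -/
def stem (T : Set Str) : Str := if h : ∃ s, IsStem T s then h.choose else []

/-- Simple splitting `T→i = T↾(root(T)⌢i)`. -/
def splitOne (T : Set Str) (i : Bool) : Set Str := Tres T (stem T ++ [i])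

/-- Iterated splitting `T→u`. -/
def splitIter (T : Set Str) (u : Str) : Set Str := u.foldl splitOne T

/-- Almost disjointness of trees: finite intersection. -/
def AD (S T : Set Str) : Prop := (S ∩ T).Finite

/-- A perfect-tree forcing notion: a nonempty set of perfect trees closed
under restrictions. -/
def IsPTF (P : Set (Set Str)) : Prop :=
  P.Nonempty ∧ (∀ T ∈ P, IsPerfectTree T) ∧ ∀ T ∈ P, ∀ s ∈ T, Tres T s ∈ P

/-- `A` is relatively clopen in `B` (as a subspace of Cantor space). -/
def ClopenIn (A B : Set Pt) : Prop := IsClopen ((fun x : B => (x : Pt)) ⁻¹' A)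

/-- `A` is relatively open in `B` (as a subspace of Cantor space). -/
def OpenIn (A B : Set Pt) : Prop := IsOpen ((fun x : B => (x : Pt)) ⁻¹' A)

/-- A special perfect-tree forcing notion: `P = {T↾s : s ∈ T ∈ A}` for an
antichain (pairwise a.d. set) `A ⊆ P`. -/
def SpecialPTF (P : Set (Set Str)) : Prop :=
  ∃ A ⊆ P, A.Pairwise AD ∧ P = {R | ∃ T ∈ A, ∃ s ∈ T, R = Tres T s}

/-- A regular perfect-tree forcing notion: `[S] ∩ [T]` is relatively clopen
in `[S]` or in `[T]`, for all `S, T ∈ P`. -/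
def RegularPTF (P : Set (Set Str)) : Prop :=
  ∀ S ∈ P, ∀ T ∈ P,
    ClopenIn (branches S ∩ branches T) (branches S) ∨
    ClopenIn (branches S ∩ branches T) (branches T)

/-- `T ⊆ᶠ ⋃ D`: `[T]` is covered by finitely many `[S]`, `S ∈ D`. -/
def SqFin (T : Set Str) (D : Set (Set Str)) : Prop :=
  ∃ D' ⊆ D, D'.Finite ∧ branches T ⊆ ⋃ S ∈ D', branches S

/-- `P ⊑ Q`: `Q` is a refinement of `P`. -/
def Refines (P Q : Set (Set Str)) : Prop :=
  (∀ T ∈ P, ∃ S ∈ Q, S ⊆ T) ∧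
  (∀ S ∈ Q, SqFin S P) ∧
  (∀ S ∈ Q, ∀ T ∈ P, ClopenIn (branches S ∩ branches T) (branches S) ∧ ¬ T ⊆ S)

/-- `D` is dense in `P`. -/
def DenseIn (D P : Set (Set Str)) : Prop := ∀ T ∈ P, ∃ S ∈ D, S ⊆ T

/-- `D` is pre-dense in `P`. -/
def PreDenseIn (D P : Set (Set Str)) : Prop :=
  DenseIn {T ∈ P | ∃ S ∈ D, T ⊆ S} P

/-- `P ⊑_D Q`: `Q` locks `D` over `P`. -/
def Locks (P D Q : Set (Set Str)) : Prop :=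
  Refines P Q ∧ ∀ S ∈ Q, SqFin S D

/-- A finite splitting system of height `n` over `P`. -/
def IsFSS (P : Set (Set Str)) (n : ℕ) (φ : Str → Set Str) : Prop :=
  (∀ s : Str, s.length ≤ n → φ s ∈ P) ∧
  ∀ (s : Str) (i : Bool), s.length < n → φ (s ++ [i]) ⊆ splitOne (φ s) i

/-! ### Auxiliary lemmas -/

lemma seg_length' (a : Pt) (n : ℕ) : (seg a n).length = n := by simp [seg]

lemma seg_prefix' (a : Pt) {m n : ℕ} (h : m ≤ n) : seg a m <+: seg a n :=
  List.IsPrefix.map a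
    (List.prefix_iff_eq_take.mpr (by rw [List.take_range]; simp [Nat.min_eq_left h]))

lemma seg_getD' (a : Pt) {n i : ℕ} (hi : i < n) : (seg a n).getD i false = a i := by
  simp [seg, List.getD, List.getElem?_map, hi]

lemma eq_of_seg_eq' {a b : Pt} {n : ℕ} (h : seg a n = seg b n) {i : ℕ} (hi : i < n) :
    a i = b i := by
  calc a i = (seg a n).getD i false := (seg_getD' a hi).symm
    _ = (seg b n).getD i false := by rw [h]
    _ = b i := seg_getD' b hi

lemma eq_of_comparable' {u v : Str} (h : u <+: v ∨ v <+: u) (hl : u.length = v.length) :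
    u = v := by
  rcases h with h | h
  · exact h.eq_of_length_le hl.ge
  · exact (h.eq_of_length_le hl.le).symm

lemma nil_mem' {T : Set Str} (hT : IsTree T) (hne : T.Nonempty) : [] ∈ T := by
  obtain ⟨t, ht⟩ := hne
  exact hT (List.nil_prefix) ht

lemma exists_ext' {T : Set Str} (hT : IsPerfectTree T) {s : Str} (hs : s ∈ T) :
    ∃ i : Bool, s ++ [i] ∈ T := by
  obtain ⟨t₁, t₂, h₁, h₂, hp₁, hp₂, hn₁, hn₂⟩ := hT.2.2 s hs
  have hne : s ≠ t₁ := by rintro rfl; exact hn₁ hp₂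
  obtain ⟨r, rfl⟩ := hp₁
  cases r with
  | nil => simp at hne
  | cons x r' => exact ⟨x, hT.2.1 (⟨r', by simp⟩ : s ++ [x] <+: s ++ x :: r') h₁⟩

lemma exists_branch' {T : Set Str} (hT : IsPerfectTree T) {s : Str} (hs : s ∈ T) :
    ∃ a : Pt, a ∈ branches T ∧ seg a s.length = s := by
  have ext : ∀ t : {t : Str // t ∈ T}, ∃ i : Bool, t.val ++ [i] ∈ T :=
    fun t => exists_ext' hT t.2
  choose f hf using ext
  let g : ℕ → {t : Str // t ∈ T} :=
    fun n => Nat.rec ⟨s, hs⟩ (fun _ p => ⟨p.val ++ [f p], hf p⟩) n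
  have hg0 : (g 0).val = s := rfl
  have hgs : ∀ n, (g (n+1)).val = (g n).val ++ [f (g n)] := fun n => rfl
  have hlen : ∀ n, (g n).val.length = s.length + n := by
    intro n
    induction n with
    | zero => simp [hg0]
    | succ k ih => rw [hgs, List.length_append, ih]; simp; omega
  have hpref : ∀ m n, m ≤ n → (g m).val <+: (g n).val := by
    intro m n h
    induction n with
    | zero =>
      have : m = 0 := Nat.le_zero.mp h
      subst this; exact List.prefix_refl _
    | succ k ih =>
      rcases Nat.lt_or_ge m (k+1) with h' | h'
      · exact (ih (Nat.lt_succ_iff.mp h')).trans (by rw [hgs]; exact List.prefix_append _ _)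
      · have : m = k + 1 := le_antisymm h h'
        subst this; exact List.prefix_refl _
  set a : Pt := fun m => (g (m+1)).val.getD m false with ha_def
  have hseg : ∀ n, seg a n = (g n).val.take n := by
    intro n
    apply List.ext_getElem?
    intro i
    rcases Nat.lt_or_ge i n with hin | hin
    · have hi3 : i < (g (i+1)).val.length := by
        have := hlen (i+1); omega
      have l1 : (seg a n)[i]? = some (a i) := by
        simp [seg, List.getElem?_map, List.getElem?_range hin]
      have l2 : ((g n).val.take n)[i]? = some (a i) := by
        obtain ⟨r, hr⟩ := hpref (i+1) n hin
        rw [List.getElem?_take_of_lt hin, ← hr, List.getElem?_append, if_pos hi3,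
          List.getElem?_eq_getElem hi3]
        have : a i = (g (i+1)).val[i] := by
          rw [ha_def]
          exact List.getD_eq_getElem _ false hi3
        rw [this]
      rw [l1, l2]
    · have l1 : (seg a n)[i]? = none := List.getElem?_eq_none (by rw [seg_length']; omega)
      have l2 : ((g n).val.take n)[i]? = none := List.getElem?_eq_none (by
        rw [List.length_take]; omega)
      rw [l1, l2]
  have haT : a ∈ branches T := by
    intro n
    rw [hseg n]
    exact hT.2.1 (List.take_prefix n _) (g n).2
  refine ⟨a, haT, ?_⟩
  rw [hseg]
  have hp := hpref 0 s.length (Nat.zero_le _)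
  rw [hg0] at hp
  exact (List.prefix_iff_eq_take.mp hp).symm

lemma Tres_subset' (T : Set Str) (s : Str) : Tres T s ⊆ T := fun _ ht => ht.1

lemma mem_Tres_self' {T : Set Str} {s : Str} (hs : s ∈ T) : s ∈ Tres T s :=
  ⟨hs, Or.inl (List.prefix_refl s)⟩

lemma isTree_Tres' {T : Set Str} (hT : IsTree T) (s : Str) : IsTree (Tres T s) := by
  intro u t hut ht
  refine ⟨hT hut ht.1, ?_⟩
  rcases ht.2 with h | h
  · exact List.prefix_or_prefix_of_prefix h hut
  · exact Or.inr (hut.trans h)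

lemma isPerfect_Tres' {T : Set Str} (hT : IsPerfectTree T) {s : Str} (hs : s ∈ T) :
    IsPerfectTree (Tres T s) := by
  refine ⟨⟨s, mem_Tres_self' hs⟩, isTree_Tres' hT.2.1 s, ?_⟩
  intro t ht
  rcases ht.2 with h | h
  · obtain ⟨t₁, t₂, h₁, h₂, p₁, p₂, n₁, n₂⟩ := hT.2.2 t ht.1
    exact ⟨t₁, t₂, ⟨h₁, Or.inl (h.trans p₁)⟩, ⟨h₂, Or.inl (h.trans p₂)⟩, p₁, p₂, n₁, n₂⟩
  · obtain ⟨t₁, t₂, h₁, h₂, p₁, p₂, n₁, n₂⟩ := hT.2.2 s hs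
    exact ⟨t₁, t₂, ⟨h₁, Or.inl p₁⟩, ⟨h₂, Or.inl p₂⟩, h.trans p₁, h.trans p₂, n₁, n₂⟩

lemma branches_mono' {S T : Set Str} (h : S ⊆ T) : branches S ⊆ branches T :=
  fun _ ha n => h (ha n)

lemma mem_branches_Tres' {T : Set Str} {s : Str} {b : Pt} :
    b ∈ branches (Tres T s) ↔ b ∈ branches T ∧ seg b s.length = s := by
  constructor
  · intro hb
    refine ⟨fun n => (hb n).1, ?_⟩
    have h := (hb s.length).2
    exact eq_of_comparable' h.symm (seg_length' _ _)
  · rintro ⟨hbT, hbs⟩ n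
    refine ⟨hbT n, ?_⟩
    rcases le_or_gt n s.length with h | h
    · exact Or.inr (by rw [← hbs]; exact seg_prefix' b h)
    · exact Or.inl (by rw [← hbs]; exact seg_prefix' b h.le)

lemma Tres_subset_of_branches' {T S : Set Str} (hT : IsPerfectTree T) {s : Str} (hs : s ∈ T)
    (h : branches (Tres T s) ⊆ branches S) : Tres T s ⊆ S := by
  intro t ht
  obtain ⟨a, haT, has⟩ := exists_branch' (isPerfect_Tres' hT hs) ht
  have haS := h haT
  rw [← has]
  exact haS t.length

lemma nbhd_basis' {V : Set Pt} (hV : IsOpen V) {a : Pt} (ha : a ∈ V) :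
    ∃ n, ∀ b : Pt, seg b n = seg a n → b ∈ V := by
  obtain ⟨I, u, hu, hsub⟩ := isOpen_pi_iff.mp hV a ha
  refine ⟨I.sup id + 1, fun b hb => hsub fun i hi => ?_⟩
  have hi' : i ∈ I := hi
  have hilt : i < I.sup id + 1 := Nat.lt_succ_of_le (Finset.le_sup (f := id) hi')
  have hba : b i = a i := eq_of_seg_eq' hb hilt
  rw [hba]
  exact (hu i hi').2

lemma clopenIn_nbhd' {A B : Set Pt} (h : ClopenIn A B) {a : Pt} (haA : a ∈ A) (haB : a ∈ B) :
    ∃ n, ∀ b ∈ B, seg b n = seg a n → b ∈ A := by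
  obtain ⟨V, hV, hVA⟩ := isOpen_induced_iff.mp h.isOpen
  have haV : a ∈ V := by
    have hmem : (⟨a, haB⟩ : B) ∈ (fun x : B => (x : Pt)) ⁻¹' A := haA
    rw [← hVA] at hmem
    exact hmem
  obtain ⟨n, hn⟩ := nbhd_basis' hV haV
  refine ⟨n, fun b hbB hb => ?_⟩
  have hmem : (⟨b, hbB⟩ : B) ∈ Subtype.val ⁻¹' V := hn b hb
  rw [hVA] at hmem
  exact hmem

lemma key1' {T S : Set Str} (hT : IsPerfectTree T) {a : Pt} (haT : a ∈ branches T)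
    (haS : a ∈ branches S) (hcl : ClopenIn (branches T ∩ branches S) (branches T)) :
    ∃ s ∈ T, Tres T s ⊆ S := by
  obtain ⟨n, hn⟩ := clopenIn_nbhd' hcl ⟨haT, haS⟩ haT
  refine ⟨seg a n, haT n, Tres_subset_of_branches' hT (haT n) ?_⟩
  intro b hb
  rw [mem_branches_Tres'] at hb
  have hbl : seg b n = seg a n := by
    have h2 := hb.2
    rwa [seg_length'] at h2
  exact (hn b hb.1 hbl).2

/-- Lemma 3.5 (pqm) (1): if `Q` locks `D` over `P` then `D` is pre-dense in
`P ∪ Q`, and also in `P` if `P` is regular. -/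
theorem stmt15 (P Q : Set (Set Str)) (hP : IsPTF P) (hQ : IsPTF Q)
    (D : Set (Set Str)) (hD : D ⊆ P) (h : Locks P D Q) :
    PreDenseIn D (P ∪ Q) ∧ (RegularPTF P → PreDenseIn D P) := by
  obtain ⟨⟨href, hsqP, hclop⟩, hlock⟩ := h
  have hBQ : ∀ S₀ ∈ Q, ∃ R ∈ Q, R ⊆ S₀ ∧ ∃ S ∈ D, R ⊆ S := by
    intro S₀ hS₀
    obtain ⟨D', hD'D, hfin, hcov⟩ := hlock S₀ hS₀
    have hS₀p : IsPerfectTree S₀ := hQ.2.1 S₀ hS₀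
    obtain ⟨a, haS₀, -⟩ := exists_branch' hS₀p (nil_mem' hS₀p.2.1 hS₀p.1)
    have hcov' := hcov haS₀
    rw [Set.mem_iUnion₂] at hcov'
    obtain ⟨S, hSD', haS⟩ := hcov'
    obtain ⟨s, hsS₀, hsub⟩ := key1' hS₀p haS₀ haS (hclop S₀ hS₀ S (hD (hD'D hSD'))).1
    exact ⟨Tres S₀ s, hQ.2.2 S₀ hS₀ s hsS₀, Tres_subset' S₀ s, S, hD'D hSD', hsub⟩
  constructor
  · intro T hT
    rcases hT with hTP | hTQ
    · obtain ⟨S₀, hS₀Q, hS₀T⟩ := href T hTP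
      obtain ⟨R, hRQ, hRS₀, S, hSD, hRS⟩ := hBQ S₀ hS₀Q
      exact ⟨R, ⟨Or.inr hRQ, S, hSD, hRS⟩, hRS₀.trans hS₀T⟩
    · obtain ⟨R, hRQ, hRS₀, S, hSD, hRS⟩ := hBQ T hTQ
      exact ⟨R, ⟨Or.inr hRQ, S, hSD, hRS⟩, hRS₀⟩
  · intro hreg T hTP
    obtain ⟨S₀, hS₀Q, hS₀T⟩ := href T hTP
    obtain ⟨D', hD'D, hfin, hcov⟩ := hlock S₀ hS₀Q
    have hS₀p : IsPerfectTree S₀ := hQ.2.1 S₀ hS₀Q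
    obtain ⟨a, haS₀, -⟩ := exists_branch' hS₀p (nil_mem' hS₀p.2.1 hS₀p.1)
    have hcov' := hcov haS₀
    rw [Set.mem_iUnion₂] at hcov'
    obtain ⟨S, hSD', haS⟩ := hcov'
    have hSD : S ∈ D := hD'D hSD'
    have hSP : S ∈ P := hD hSD
    have haT : a ∈ branches T := branches_mono' hS₀T haS₀
    rcases hreg T hTP S hSP with hcl | hcl
    · obtain ⟨s, hsT, hsub⟩ := key1' (hP.2.1 T hTP) haT haS hcl
      exact ⟨Tres T s, ⟨hP.2.2 T hTP s hsT, S, hSD, hsub⟩, Tres_subset' T s⟩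
    · rw [Set.inter_comm] at hcl
      obtain ⟨s, hsS, hsub⟩ := key1' (hP.2.1 S hSP) haS haT hcl
      exact ⟨Tres S s, ⟨hP.2.2 S hSP s hsS, S, hSD, Tres_subset' S s⟩, hsub⟩


end
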